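/- If G is a k-vertex-critical graph (χ(G)=k and χ(G−v)<k for every vertex v) and M is a non-trivial module of G (a set M with 2 ≤ |M| < |V(G)| such that every vertex outside M is adjacent to all of M or to none of M), then the induced subgraph G[M] is m-vertex-critical for some m < k. -/

import Mathlib

open SimpleGraph

/-- A graph is `k`-vertex-critical if its chromatic number is `k` and deleting
any vertex lowers the chromatic number. -/
def IsKVertexCritical {V : Type*} (G : SimpleGraph V) (k : ℕ) : Prop :=
  G.chromaticNumber = (k : ℕ∞) ∧
    ∀ v : V, (G.induce {u | u ≠ v}).chromaticNumber < (k : ℕ∞)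

/-- The clique number of a graph. -/
noncomputable def cliqueNum' {V : Type*} (G : SimpleGraph V) : ℕ :=
  sSup {n | ∃ s : Finset V, G.IsNClique n s}

/-- `G` has no induced subgraph isomorphic to `H`. -/
def IndFree {W V : Type*} (H : SimpleGraph W) (G : SimpleGraph V) : Prop :=
  ¬ ∃ s : Set V, Nonempty (H ≃g G.induce s)

def CompleteTo {V : Type*} (G : SimpleGraph V) (S T : Set V) : Prop :=
  ∀ s ∈ S, ∀ t ∈ T, G.Adj s t

def AnticompleteTo {V : Type*} (G : SimpleGraph V) (S T : Set V) : Prop :=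
  ∀ s ∈ S, ∀ t ∈ T, ¬ G.Adj s t

/-- `M` is a module of `G`: each outside vertex is complete or anticomplete to `M`. -/
def IsModule {V : Type*} (G : SimpleGraph V) (M : Set V) : Prop :=
  ∀ v ∉ M, (∀ m ∈ M, G.Adj v m) ∨ (∀ m ∈ M, ¬ G.Adj v m)

/-- A non-trivial module: a module `M` with `2 ≤ |M| < |V(G)|`. -/
def IsNontrivialModule {V : Type*} (G : SimpleGraph V) (M : Set V) : Prop :=
  IsModule G M ∧ 2 ≤ M.ncard ∧ M.ncard < Nat.card V

/-- `G` is an expansion of `H` with parts `Q w`: parts are nonempty, partition `V(G)`,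
are completely joined along edges of `H` and anticomplete along non-edges. -/
def IsExpansion {V W : Type*} (G : SimpleGraph V) (H : SimpleGraph W) (Q : W → Set V) : Prop :=
  (∀ w, (Q w).Nonempty) ∧
  (Pairwise fun w w' => Disjoint (Q w) (Q w')) ∧
  (∀ v, ∃ w, v ∈ Q w) ∧
  (∀ w w', H.Adj w w' → CompleteTo G (Q w) (Q w')) ∧
  (∀ w w', w ≠ w' → ¬ H.Adj w w' → AnticompleteTo G (Q w) (Q w'))

/-- The path on four vertices. -/
def P4 : SimpleGraph (Fin 4) := SimpleGraph.pathGraph 4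

/-- The path on five vertices. -/
def P5 : SimpleGraph (Fin 5) := SimpleGraph.pathGraph 5

/-- The gem: a `P₄` (0-1-2-3) plus a dominating vertex 4. -/
def gem : SimpleGraph (Fin 5) :=
  SimpleGraph.fromRel (fun a b =>
    (a, b) ∈ [((0 : Fin 5), (1 : Fin 5)), (1, 2), (2, 3), (4, 0), (4, 1), (4, 2), (4, 3)])

/-- The five-cycle. -/
def cycle5 : SimpleGraph (Fin 5) :=
  SimpleGraph.fromRel (fun a b =>
    (a, b) ∈ [((0 : Fin 5), (1 : Fin 5)), (1, 2), (2, 3), (3, 4), (4, 0)])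


/-- Iso between a nested induce and a single induce. -/
def induceInduceIso' {V : Type*} (G : SimpleGraph V) (M : Set V) (v : ↥M) :
    (G.induce M).induce {u : ↥M | u ≠ v} ≃g G.induce (M \ {(v : V)}) where
  toFun x := ⟨(x.1 : V), x.1.2, fun h => x.2 (Subtype.ext h)⟩
  invFun y := ⟨⟨y.1, y.2.1⟩, fun h => y.2.2 (congrArg Subtype.val h)⟩
  left_inv x := by ext; rfl
  right_inv y := by ext; rfl
  map_rel_iff' := Iff.rfl

lemma iso_chromaticNumber_eq {V W : Type*} {G : SimpleGraph V} {H : SimpleGraph W}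
    (e : G ≃g H) : G.chromaticNumber = H.chromaticNumber :=
  le_antisymm (chromaticNumber_mono_of_hom e.toEmbedding.toHom)
    (chromaticNumber_mono_of_hom e.symm.toEmbedding.toHom)

/-- a non-trivial module of a `k`-vertex-critical graph induces an
`m`-vertex-critical graph for some `m < k`. -/
theorem module_of_critical_is_critical {V : Type*} [Fintype V] (G : SimpleGraph V) (k : ℕ)
    (M : Set V) (hG : IsKVertexCritical G k) (hM : IsNontrivialModule G M) :
    ∃ m : ℕ, m < k ∧ IsKVertexCritical (G.induce M) m := by
  classical
  obtain ⟨hχ, hcrit⟩ := hG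
  obtain ⟨hmod, hM2, hMlt⟩ := hM
  have hMneuniv : M ≠ Set.univ := by
    intro h; rw [h, Set.ncard_univ] at hMlt; exact lt_irrefl _ hMlt
  obtain ⟨v0, hv0⟩ : ∃ v, v ∉ M := by
    by_contra h; push_neg at h; exact hMneuniv (Set.eq_univ_of_forall h)
  have hk1 : 1 ≤ k := by
    by_contra h
    have hk0 : k = 0 := by omega
    subst hk0
    exact absurd (hcrit v0) (by simp)
  have hsub : M ⊆ {u | u ≠ v0} := fun x hx h => hv0 (h ▸ hx)
  have hltk : (G.induce M).chromaticNumber < (k : ℕ∞) :=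
    lt_of_le_of_lt (chromaticNumber_mono_of_hom (G.induceHomOfLE hsub).toHom) (hcrit v0)
  set m : ℕ := (G.induce M).chromaticNumber.toNat with hm_def
  have hm : (G.induce M).chromaticNumber = (m : ℕ∞) := by
    have : (G.induce M).chromaticNumber ≠ ⊤ := (hltk.trans_le le_top).ne
    exact (ENat.coe_toNat this).symm
  have hmk : m < k := by
    rw [hm] at hltk; exact_mod_cast hltk
  refine ⟨m, hmk, hm, ?_⟩
  intro u
  by_contra hcon
  push_neg at hcon
  -- `hcon : m ≤ χ((G[M]) - u)`
  set u0 : V := (u : V) with hu0_def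
  have hu0M : u0 ∈ M := u.2
  -- χ(G[M \ {u0}]) = m
  have hge : (m : ℕ∞) ≤ (G.induce (M \ {u0})).chromaticNumber := by
    calc (m : ℕ∞) ≤ ((G.induce M).induce {x : ↥M | x ≠ u}).chromaticNumber := hcon
      _ = (G.induce (M \ {u0})).chromaticNumber :=
        iso_chromaticNumber_eq (induceInduceIso' G M u)
  -- a coloring of G - u0 with k-1 colors
  have hcu : (G.induce {w | w ≠ u0}).Colorable (k - 1) := by
    have h1 := hcrit u0
    have h2 := (G.induce {w | w ≠ u0}).colorable_chromaticNumber_of_fintype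
    refine h2.mono ?_
    have hne : (G.induce {w | w ≠ u0}).chromaticNumber ≠ ⊤ := (h1.trans_le le_top).ne
    have := (ENat.coe_toNat hne).symm ▸ h1
    have hlt : (G.induce {w | w ≠ u0}).chromaticNumber.toNat < k := by exact_mod_cast this
    omega
  obtain ⟨f⟩ := hcu
  -- a coloring of G[M] with m colors
  have hcM : (G.induce M).Colorable m := by
    have h2 := (G.induce M).colorable_chromaticNumber_of_fintype
    rwa [hm, ENat.toNat_coe] at h2
  obtain ⟨g⟩ := hcM
  -- restriction of f to M \ {u0}
  have hneu : ∀ x : ↥(M \ {u0}), (x : V) ≠ u0 := fun x => x.2.2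
  set r : ↥(M \ {u0}) → Fin (k - 1) := fun x => f ⟨(x : V), hneu x⟩ with hr_def
  set S : Set (Fin (k - 1)) := Set.range r with hS_def
  -- the restriction is a proper coloring into S
  have C' : (G.induce (M \ {u0})).Coloring ↥S :=
    Coloring.mk (fun x => ⟨r x, Set.mem_range_self x⟩) (by
      intro x y hxy h
      have hadj : (G.induce {w | w ≠ u0}).Adj ⟨(x : V), hneu x⟩ ⟨(y : V), hneu y⟩ := hxy
      exact f.valid hadj (congrArg Subtype.val h))
  have hmS : m ≤ Fintype.card ↥S := by
    have h1 : (G.induce (M \ {u0})).chromaticNumber ≤ (Fintype.card ↥S : ℕ∞) :=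
      C'.colorable.chromaticNumber_le
    exact_mod_cast hge.trans h1
  obtain ⟨ι⟩ : Nonempty (Fin m ↪ ↥S) :=
    Function.Embedding.nonempty_of_card_le (by simpa using hmS)
  -- build a proper coloring of G with k-1 colors
  set F : V → Fin (k - 1) := fun x =>
    if h : x ∈ M then (ι (g ⟨x, h⟩) : Fin (k - 1))
    else f ⟨x, fun he => (he ▸ h) hu0M⟩ with hF_def
  have hFS : ∀ x (h : x ∈ M), F x ∈ S := by
    intro x h
    simp only [hF_def, dif_pos h]
    exact (ι (g ⟨x, h⟩)).2
  have hfnotS : ∀ x (h : x ∉ M) (hne : x ≠ u0), (∀ p ∈ M, G.Adj x p) →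
      f ⟨x, hne⟩ ∉ S := by
    rintro x hx hne hcomp ⟨y, hy⟩
    have hadj : (G.induce {w | w ≠ u0}).Adj ⟨x, hne⟩ ⟨(y : V), hneu y⟩ :=
      hcomp (y : V) y.2.1
    exact f.valid hadj hy.symm
  have hvalid : ∀ {a b : V}, G.Adj a b → F a ≠ F b := by
    intro a b hab
    have hcompl : ∀ c d, c ∉ M → d ∈ M → G.Adj c d → ∀ p ∈ M, G.Adj c p := by
      intro c d hc hd hcd
      rcases hmod c hc with h | h
      · exact h
      · exact absurd hcd (h d hd)
    by_cases ha : a ∈ M <;> by_cases hb : b ∈ M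
    · simp only [hF_def, dif_pos ha, dif_pos hb]
      intro h
      have hadj : (G.induce M).Adj ⟨a, ha⟩ ⟨b, hb⟩ := hab
      exact g.valid hadj (ι.injective (Subtype.ext h))
    · intro h
      have hbne : b ≠ u0 := fun he => (he ▸ hb) hu0M
      have : F b ∉ S := by
        simp only [hF_def, dif_neg hb]
        exact hfnotS b hb hbne (hcompl b a hb ha hab.symm)
      exact this (h ▸ hFS a ha)
    · intro h
      have hane : a ≠ u0 := fun he => (he ▸ ha) hu0M
      have : F a ∉ S := by
        simp only [hF_def, dif_neg ha]
        exact hfnotS a ha hane (hcompl a b ha hb hab)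
      exact this (h.symm ▸ hFS b hb)
    · simp only [hF_def, dif_neg ha, dif_neg hb]
      have hadj : (G.induce {w | w ≠ u0}).Adj ⟨a, fun he => (he ▸ ha) hu0M⟩
          ⟨b, fun he => (he ▸ hb) hu0M⟩ := hab
      exact f.valid hadj
  have hGcol : G.Colorable (k - 1) := ⟨Coloring.mk F hvalid⟩
  have hle := hGcol.chromaticNumber_le
  rw [hχ] at hle
  have : k ≤ k - 1 := by exact_mod_cast hle
  omega
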